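/- Let G be an unweighted directed graph with m directed edges in which every vertex has indegree at least d ≥ 0, and let v ∈ V(G) be a vertex with ept_rzf(G,v) < ∞. Then ept_rzf(G,v) ≤ m − d. -/

import Mathlib

open scoped ENNReal NNReal

namespace RZF

variable {V : Type*} [Fintype V] [DecidableEq V]

/-- Probability that the white vertex `x` turns blue in one round of weighted
randomized zero forcing with weights `w`, given the current blue set `B`
(`0` when the total incoming weight of `x` is `0`). -/
noncomputable def turnProb (w : V → V → ℝ≥0) (B : Finset V) (x : V) : ℝ≥0 :=
  (∑ u ∈ B, w u x) / ∑ u, w u x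

/-- One-round transition probability of the RZF Markov chain from blue set `B`
to blue set `C`: each white vertex independently turns blue with probability
`turnProb w B ·`, and blue vertices stay blue. -/
noncomputable def stepProb (w : V → V → ℝ≥0) (B C : Finset V) : ℝ≥0∞ :=
  if B ⊆ C then
    (∏ x ∈ C \ B, (turnProb w B x : ℝ≥0∞)) *
      ∏ x ∈ Cᶜ, (1 - (turnProb w B x : ℝ≥0∞))
  else 0

/-- Distribution of the blue set after `t` rounds, started from `S`. -/
noncomputable def state (w : V → V → ℝ≥0) (S : Finset V) : ℕ → Finset V → ℝ≥0∞
  | 0 => fun C => if C = S then 1 else 0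
  | t + 1 => fun C => ∑ B : Finset V, state w S t B * stepProb w B C

/-- Expected propagation time `∑ₜ P(Bₜ ≠ V(G))`; this equals `E[τ]` when the
all-blue state is reachable from `S`, and `∞` otherwise. -/
noncomputable def ept (w : V → V → ℝ≥0) (S : Finset V) : ℝ≥0∞ :=
  ∑' t : ℕ, ∑ C ∈ Finset.univ.filter (fun C : Finset V => C ≠ Finset.univ),
    state w S t C

/-- Minimum expected propagation time over singleton starting sets. -/
noncomputable def eptMin (w : V → V → ℝ≥0) : ℝ≥0∞ :=
  ⨅ v : V, ept w {v}

/-- The weight function of an unweighted directed graph: weight `1` on each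
edge and `0` otherwise, so that `turnProb` is the fraction of in-neighbors
that are blue. -/
def unweight (adj : V → V → Prop) [DecidableRel adj] : V → V → ℝ≥0 :=
  fun u v => if adj u v then 1 else 0

end RZF

open Finset

namespace RZFaux
variable {V : Type*} [Fintype V] [DecidableEq V]

lemma turnProb_le_one (w : V → V → ℝ≥0) (B : Finset V) (x : V) :
    RZF.turnProb w B x ≤ 1 := by
  unfold RZF.turnProb
  rcases eq_or_ne (∑ u, w u x) 0 with h | h
  · simp [h]
  · exact div_le_one_of_le₀ (Finset.sum_le_sum_of_subset (Finset.subset_univ B)) zero_le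

/-- reindex sum over C by T = C \ B -/
lemma sum_over_supersets (B : Finset V) (F : Finset V → ℝ≥0∞)
    (h0 : ∀ C, ¬ B ⊆ C → F C = 0) :
    ∑ C : Finset V, F C = ∑ T ∈ Bᶜ.powerset, F (B ∪ T) := by
  rw [← Finset.sum_filter_add_sum_filter_not Finset.univ (fun C => B ⊆ C)]
  have h2 : ∑ C ∈ Finset.univ.filter (fun C => ¬ B ⊆ C), F C = 0 := by
    apply Finset.sum_eq_zero
    intro C hC
    exact h0 C (Finset.mem_filter.mp hC).2
  rw [h2, add_zero]
  apply Finset.sum_nbij' (fun C => C \ B) (fun T => B ∪ T)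
  · intro C hC
    simp only [Finset.mem_powerset]
    intro x hx
    simp only [Finset.mem_sdiff] at hx
    simp [hx.2]
  · intro T hT
    simp
  · intro C hC
    have : B ⊆ C := (Finset.mem_filter.mp hC).2
    rw [Finset.union_sdiff_of_subset this]
  · intro T hT
    simp only [Finset.mem_powerset] at hT
    rw [Finset.union_sdiff_cancel_left]
    rw [Finset.disjoint_left]
    intro a ha haT
    have := hT haT
    simp at this
    exact this ha
  · intro C hC
    have : B ⊆ C := (Finset.mem_filter.mp hC).2
    rw [Finset.union_sdiff_of_subset this]

end RZFaux

namespace RZFaux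
set_option linter.unusedSectionVars false
variable {V : Type*} [Fintype V] [DecidableEq V]

lemma sum_powerset_prod (W : Finset V) (p c : V → ℝ≥0∞) :
    ∑ T ∈ W.powerset, (∏ x ∈ T, p x) * ∏ x ∈ W \ T, c x = ∏ x ∈ W, (p x + c x) :=
  (Finset.prod_add p c W).symm

lemma sum_stepProb (w : V → V → ℝ≥0) (B : Finset V) :
    ∑ C : Finset V, RZF.stepProb w B C = 1 := by
  have h0 : ∀ C, ¬ B ⊆ C → RZF.stepProb w B C = 0 := by
    intro C hC; simp [RZF.stepProb, hC]
  rw [sum_over_supersets B _ h0]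
  have key : ∀ T ∈ Bᶜ.powerset, RZF.stepProb w B (B ∪ T) =
      (∏ x ∈ T, (RZF.turnProb w B x : ℝ≥0∞)) *
        ∏ x ∈ Bᶜ \ T, (1 - (RZF.turnProb w B x : ℝ≥0∞)) := by
    intro T hT
    simp only [Finset.mem_powerset] at hT
    have hd : Disjoint B T := by
      rw [Finset.disjoint_left]; intro a ha haT
      have := hT haT; simp at this; exact this ha
    have h1 : (B ∪ T) \ B = T := Finset.union_sdiff_cancel_left hd
    have h2 : (B ∪ T)ᶜ = Bᶜ \ T := by
      ext a; simp only [Finset.mem_compl, Finset.mem_union, Finset.mem_sdiff]; tauto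
    rw [RZF.stepProb, if_pos Finset.subset_union_left, h1, h2]
  rw [Finset.sum_congr rfl key, sum_powerset_prod]
  apply Finset.prod_eq_one
  intro x _
  have hle : (RZF.turnProb w B x : ℝ≥0∞) ≤ 1 := by
    exact_mod_cast turnProb_le_one w B x
  rw [add_comm, tsub_add_cancel_of_le hle]

lemma sum_stepProb_indicator (w : V → V → ℝ≥0) (B : Finset V) (x0 : V) (hx0 : x0 ∉ B) :
    ∑ C : Finset V, RZF.stepProb w B C * (if x0 ∈ C then 1 else 0) =
      (RZF.turnProb w B x0 : ℝ≥0∞) := by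
  have h0 : ∀ C, ¬ B ⊆ C → RZF.stepProb w B C * (if x0 ∈ C then 1 else 0) = 0 := by
    intro C hC; simp [RZF.stepProb, hC]
  rw [sum_over_supersets B _ h0]
  set p : V → ℝ≥0∞ := fun x => (RZF.turnProb w B x : ℝ≥0∞) with hp
  set c : V → ℝ≥0∞ := fun x => if x = x0 then 0 else 1 - p x with hc
  have key : ∀ T ∈ Bᶜ.powerset, RZF.stepProb w B (B ∪ T) * (if x0 ∈ B ∪ T then 1 else 0) =
      (∏ x ∈ T, p x) * ∏ x ∈ Bᶜ \ T, c x := by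
    intro T hT
    simp only [Finset.mem_powerset] at hT
    have hd : Disjoint B T := by
      rw [Finset.disjoint_left]; intro a ha haT
      have := hT haT; simp at this; exact this ha
    have h1 : (B ∪ T) \ B = T := Finset.union_sdiff_cancel_left hd
    have h2 : (B ∪ T)ᶜ = Bᶜ \ T := by
      ext a; simp only [Finset.mem_compl, Finset.mem_union, Finset.mem_sdiff]; tauto
    rw [RZF.stepProb, if_pos Finset.subset_union_left, h1, h2]
    by_cases hx : x0 ∈ T
    · have hmem : x0 ∈ B ∪ T := Finset.mem_union_right _ hx
      rw [if_pos hmem, mul_one]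
      congr 1
      apply Finset.prod_congr rfl
      intro x hxm
      have : x ≠ x0 := by
        intro h; subst h; exact (Finset.mem_sdiff.mp hxm).2 hx
      simp [hc, hp, this]
    · have hmem : x0 ∉ B ∪ T := by
        simp only [Finset.mem_union]; rintro (h | h); exacts [hx0 h, hx h]
      rw [if_neg hmem, mul_zero]
      have hx0m : x0 ∈ Bᶜ \ T := by
        simp only [Finset.mem_sdiff, Finset.mem_compl]; exact ⟨hx0, hx⟩
      rw [eq_comm, mul_eq_zero]
      right
      apply Finset.prod_eq_zero hx0m
      simp [hc]
  rw [Finset.sum_congr rfl key, sum_powerset_prod]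
  have hx0c : x0 ∈ Bᶜ := Finset.mem_compl.mpr hx0
  rw [Finset.prod_eq_single_of_mem x0 hx0c]
  · simp [hc, hp]
  · intro x _ hx
    have hle : p x ≤ 1 := by
      simp only [hp]; exact_mod_cast turnProb_le_one w B x
    simp only [hc, if_neg hx]
    rw [add_comm, tsub_add_cancel_of_le hle]

end RZFaux

namespace RZFaux
variable {V : Type*} [Fintype V] [DecidableEq V]

/-- Sum of in-degrees of the white vertices. -/
def Phi (adj : V → V → Prop) [DecidableRel adj] (B : Finset V) : ℕ :=
  ∑ x ∈ Bᶜ, (Finset.univ.filter (fun u => adj u x)).card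

lemma step_dec (adj : V → V → Prop) [DecidableRel adj] (B : Finset V) (x0 : V)
    (hx0 : x0 ∉ B) (hb : (B.filter (fun u => adj u x0)).card ≠ 0) :
    ∑ C : Finset V, RZF.stepProb (RZF.unweight adj) B C * (Phi adj C : ℝ≥0∞) + 1
      ≤ (Phi adj B : ℝ≥0∞) := by
  set w := RZF.unweight adj with hw
  set b := (B.filter (fun u => adj u x0)).card with hbdef
  set dx := (Finset.univ.filter (fun u => adj u x0)).card with hdxdef
  have hbd : b ≤ dx :=
    Finset.card_le_card (Finset.filter_subset_filter _ (Finset.subset_univ B))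
  have hdx : dx ≠ 0 := fun h => hb (Nat.le_zero.mp (h ▸ hbd))
  have hsum1 : (∑ u ∈ B, w u x0) = (b : ℝ≥0) := by
    simp [hw, RZF.unweight, hbdef, Finset.sum_boole]
  have hsum2 : (∑ u, w u x0) = (dx : ℝ≥0) := by
    simp [hw, RZF.unweight, hdxdef, Finset.sum_boole]
  have htp : RZF.turnProb w B x0 = (b : ℝ≥0) / (dx : ℝ≥0) := by
    rw [RZF.turnProb, hsum1, hsum2]
  have hmul : (dx : ℝ≥0) * RZF.turnProb w B x0 = (b : ℝ≥0) := by
    rw [htp, mul_comm, div_mul_cancel₀]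
    exact_mod_cast hdx
  have hmulE : (dx : ℝ≥0∞) * (RZF.turnProb w B x0 : ℝ≥0∞) = (b : ℝ≥0∞) := by
    rw [← ENNReal.coe_natCast dx, ← ENNReal.coe_mul, hmul, ENNReal.coe_natCast]
  have hone : (1 : ℝ≥0∞) ≤ (b : ℝ≥0∞) := by
    exact_mod_cast Nat.one_le_iff_ne_zero.mpr hb
  calc ∑ C : Finset V, RZF.stepProb w B C * (Phi adj C : ℝ≥0∞) + 1
      ≤ ∑ C : Finset V, RZF.stepProb w B C * (Phi adj C : ℝ≥0∞) +
          (dx : ℝ≥0∞) * (RZF.turnProb w B x0 : ℝ≥0∞) := by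
        rw [hmulE]; exact add_le_add_right hone _
    _ = ∑ C : Finset V, RZF.stepProb w B C * (Phi adj C : ℝ≥0∞) +
          (dx : ℝ≥0∞) * ∑ C : Finset V, RZF.stepProb w B C * (if x0 ∈ C then 1 else 0) := by
        rw [sum_stepProb_indicator w B x0 hx0]
    _ = ∑ C : Finset V, RZF.stepProb w B C *
          ((Phi adj C : ℝ≥0∞) + (dx : ℝ≥0∞) * (if x0 ∈ C then 1 else 0)) := by
        rw [Finset.mul_sum, ← Finset.sum_add_distrib]
        apply Finset.sum_congr rfl
        intro C _; ring
    _ ≤ ∑ C : Finset V, RZF.stepProb w B C * (Phi adj B : ℝ≥0∞) := by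
        apply Finset.sum_le_sum
        intro C _
        by_cases hBC : B ⊆ C
        · apply mul_le_mul_right
          have hsub : Cᶜ ⊆ Bᶜ := Finset.compl_subset_compl.mpr hBC
          have hnat : Phi adj C + (if x0 ∈ C then dx else 0) ≤ Phi adj B := by
            by_cases hxC : x0 ∈ C
            · rw [if_pos hxC]
              have h1 : insert x0 Cᶜ ⊆ Bᶜ := by
                intro a ha
                rcases Finset.mem_insert.mp ha with rfl | h
                · exact Finset.mem_compl.mpr hx0
                · exact hsub h
              have h2 : x0 ∉ Cᶜ := by simp [hxC]
              have h3 := Finset.sum_le_sum_of_subset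
                (f := fun x => (Finset.univ.filter (fun u => adj u x)).card) h1
              rw [Finset.sum_insert h2] at h3
              have h3' : dx + Phi adj C ≤ Phi adj B := by simpa [Phi] using h3
              omega
            · rw [if_neg hxC, add_zero]
              exact Finset.sum_le_sum_of_subset hsub
          calc (Phi adj C : ℝ≥0∞) + (dx : ℝ≥0∞) * (if x0 ∈ C then 1 else 0)
              = ((Phi adj C + if x0 ∈ C then dx else 0 : ℕ) : ℝ≥0∞) := by
                split_ifs <;> push_cast <;> ring
            _ ≤ _ := by exact_mod_cast hnat
        · simp [RZF.stepProb, hBC]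
    _ = (Phi adj B : ℝ≥0∞) := by
        rw [← Finset.sum_mul, sum_stepProb, one_mul]

end RZFaux

namespace RZFaux
set_option linter.unusedSectionVars false
variable {V : Type*} [Fintype V] [DecidableEq V]

lemma stepProb_self_eq_one (adj : V → V → Prop) [DecidableRel adj] (B : Finset V)
    (hstuck : ∀ x ∉ B, ∀ u ∈ B, ¬ adj u x) :
    RZF.stepProb (RZF.unweight adj) B B = 1 := by
  have htp : ∀ x ∈ Bᶜ, (RZF.turnProb (RZF.unweight adj) B x : ℝ≥0∞) = 0 := by
    intro x hx
    have h0 : (∑ u ∈ B, RZF.unweight adj u x) = 0 := by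
      apply Finset.sum_eq_zero
      intro u hu
      simp [RZF.unweight, hstuck x (Finset.mem_compl.mp hx) u hu]
    simp [RZF.turnProb, h0]
  rw [RZF.stepProb, if_pos (subset_refl B), Finset.sdiff_self, Finset.prod_empty, one_mul]
  apply Finset.prod_eq_one
  intro x hx
  rw [htp x hx, tsub_zero]

lemma state_mono (w : V → V → ℝ≥0) (S B : Finset V)
    (hBB : RZF.stepProb w B B = 1) (t : ℕ) :
    ∀ s, RZF.state w S t B ≤ RZF.state w S (t + s) B := by
  intro s
  induction s with
  | zero => exact le_refl _
  | succ s ih =>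
    calc RZF.state w S t B ≤ RZF.state w S (t + s) B := ih
      _ = RZF.state w S (t + s) B * RZF.stepProb w B B := by rw [hBB, mul_one]
      _ ≤ ∑ B' : Finset V, RZF.state w S (t + s) B' * RZF.stepProb w B' B :=
          Finset.single_le_sum (f := fun B' => RZF.state w S (t + s) B' * RZF.stepProb w B' B)
            (fun _ _ => zero_le) (Finset.mem_univ B)
      _ = RZF.state w S (t + s + 1) B := rfl

lemma good_of_ept_ne_top (adj : V → V → Prop) [DecidableRel adj] (S : Finset V)
    (hfin : RZF.ept (RZF.unweight adj) S ≠ ⊤) (t : ℕ) (B : Finset V)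
    (hB : B ≠ Finset.univ) (hp : RZF.state (RZF.unweight adj) S t B ≠ 0) :
    ∃ x0, x0 ∉ B ∧ (B.filter (fun u => adj u x0)).card ≠ 0 := by
  by_contra h
  push_neg at h
  have hstuck : ∀ x ∉ B, ∀ u ∈ B, ¬ adj u x := by
    intro x hx u hu hadj
    have hc := h x hx
    have hmem : u ∈ B.filter (fun u => adj u x) := Finset.mem_filter.mpr ⟨hu, hadj⟩
    rw [Finset.card_eq_zero] at hc
    rw [hc] at hmem
    exact absurd hmem (Finset.notMem_empty u)
  have hBB := stepProb_self_eq_one adj B hstuck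
  apply hfin
  rw [RZF.ept, eq_top_iff]
  calc (⊤ : ℝ≥0∞) = ∑' _ : ℕ, RZF.state (RZF.unweight adj) S t B :=
        (ENNReal.tsum_const_eq_top_of_ne_zero hp).symm
    _ ≤ ∑' s : ℕ, ∑ C ∈ Finset.univ.filter (fun C : Finset V => C ≠ Finset.univ),
          RZF.state (RZF.unweight adj) S (t + s) C := by
        apply ENNReal.tsum_le_tsum
        intro s
        calc RZF.state (RZF.unweight adj) S t B
            ≤ RZF.state (RZF.unweight adj) S (t + s) B :=
              state_mono _ S B hBB t s
          _ ≤ _ := Finset.single_le_sum (fun _ _ => zero_le)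
              (Finset.mem_filter.mpr ⟨Finset.mem_univ B, hB⟩)
    _ ≤ ∑' u : ℕ, ∑ C ∈ Finset.univ.filter (fun C : Finset V => C ≠ Finset.univ),
          RZF.state (RZF.unweight adj) S u C :=
        ENNReal.tsum_comp_le_tsum_of_injective (add_right_injective t) _

end RZFaux

namespace RZFaux
set_option linter.unusedSectionVars false
variable {V : Type*} [Fintype V] [DecidableEq V]

lemma main_dec (adj : V → V → Prop) [DecidableRel adj] (S : Finset V)
    (hfin : RZF.ept (RZF.unweight adj) S ≠ ⊤) (t : ℕ) :
    (∑ B : Finset V, RZF.state (RZF.unweight adj) S (t + 1) B * (Phi adj B : ℝ≥0∞)) +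
      ∑ C ∈ Finset.univ.filter (fun C : Finset V => C ≠ Finset.univ),
        RZF.state (RZF.unweight adj) S t C
      ≤ ∑ B : Finset V, RZF.state (RZF.unweight adj) S t B * (Phi adj B : ℝ≥0∞) := by
  set w := RZF.unweight adj with hw
  have hexp : ∑ B : Finset V, RZF.state w S (t + 1) B * (Phi adj B : ℝ≥0∞) =
      ∑ B : Finset V, RZF.state w S t B *
        ∑ C : Finset V, RZF.stepProb w B C * (Phi adj C : ℝ≥0∞) := by
    have : ∀ C : Finset V, RZF.state w S (t + 1) C =
        ∑ B : Finset V, RZF.state w S t B * RZF.stepProb w B C := fun C => rfl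
    simp only [this, Finset.sum_mul, Finset.mul_sum]
    rw [Finset.sum_comm]
    apply Finset.sum_congr rfl
    intro B _
    apply Finset.sum_congr rfl
    intro C _
    ring
  have hsecond : ∑ C ∈ Finset.univ.filter (fun C : Finset V => C ≠ Finset.univ),
      RZF.state w S t C =
      ∑ B : Finset V, RZF.state w S t B * (if B = Finset.univ then 0 else 1) := by
    rw [Finset.sum_filter]
    apply Finset.sum_congr rfl
    intro B _
    by_cases h : B = Finset.univ <;> simp [h]
  rw [hexp, hsecond, ← Finset.sum_add_distrib]
  apply Finset.sum_le_sum
  intro B _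
  by_cases hz : RZF.state w S t B = 0
  · simp [hz]
  by_cases hBu : B = Finset.univ
  · subst hBu
    have hPhi : Phi adj (Finset.univ : Finset V) = 0 := by
      simp [Phi]
    have hsum0 : ∑ C : Finset V, RZF.stepProb w Finset.univ C * (Phi adj C : ℝ≥0∞) = 0 := by
      apply Finset.sum_eq_zero
      intro C _
      by_cases hC : (Finset.univ : Finset V) ⊆ C
      · rw [Finset.univ_subset_iff.mp hC, hPhi]; simp
      · simp [RZF.stepProb, hC]
    rw [hsum0, hPhi, if_pos rfl]
    simp
  · obtain ⟨x0, hx0, hb⟩ := good_of_ept_ne_top adj S hfin t B hBu hz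
    have hkey := step_dec adj B x0 hx0 hb
    rw [if_neg hBu]
    calc RZF.state w S t B * (∑ C : Finset V, RZF.stepProb w B C * (Phi adj C : ℝ≥0∞)) +
          RZF.state w S t B * 1
        = RZF.state w S t B *
            ((∑ C : Finset V, RZF.stepProb w B C * (Phi adj C : ℝ≥0∞)) + 1) := by ring
      _ ≤ RZF.state w S t B * (Phi adj B : ℝ≥0∞) := mul_le_mul_right hkey _

lemma partial_sum_le (adj : V → V → Prop) [DecidableRel adj] (S : Finset V)
    (hfin : RZF.ept (RZF.unweight adj) S ≠ ⊤) (T : ℕ) :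
    (∑ B : Finset V, RZF.state (RZF.unweight adj) S T B * (Phi adj B : ℝ≥0∞)) +
      ∑ t ∈ Finset.range T,
        ∑ C ∈ Finset.univ.filter (fun C : Finset V => C ≠ Finset.univ),
          RZF.state (RZF.unweight adj) S t C
      ≤ (Phi adj S : ℝ≥0∞) := by
  induction T with
  | zero =>
    simp only [Finset.range_zero, Finset.sum_empty, add_zero]
    have : ∀ B : Finset V, RZF.state (RZF.unweight adj) S 0 B =
        if B = S then 1 else 0 := fun B => rfl
    simp only [this]
    rw [Finset.sum_eq_single_of_mem S (Finset.mem_univ S)]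
    · simp
    · intro B _ hB; simp [hB]
  | succ T ih =>
    calc (∑ B : Finset V, RZF.state (RZF.unweight adj) S (T + 1) B * (Phi adj B : ℝ≥0∞)) +
          ∑ t ∈ Finset.range (T + 1),
            ∑ C ∈ Finset.univ.filter (fun C : Finset V => C ≠ Finset.univ),
              RZF.state (RZF.unweight adj) S t C
        = ((∑ B : Finset V, RZF.state (RZF.unweight adj) S (T + 1) B * (Phi adj B : ℝ≥0∞)) +
            ∑ C ∈ Finset.univ.filter (fun C : Finset V => C ≠ Finset.univ),
              RZF.state (RZF.unweight adj) S T C) +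
            ∑ t ∈ Finset.range T,
              ∑ C ∈ Finset.univ.filter (fun C : Finset V => C ≠ Finset.univ),
                RZF.state (RZF.unweight adj) S t C := by
          rw [Finset.sum_range_succ]; ring
      _ ≤ (∑ B : Finset V, RZF.state (RZF.unweight adj) S T B * (Phi adj B : ℝ≥0∞)) +
            ∑ t ∈ Finset.range T,
              ∑ C ∈ Finset.univ.filter (fun C : Finset V => C ≠ Finset.univ),
                RZF.state (RZF.unweight adj) S t C :=
          add_le_add_left (main_dec adj S hfin T) _
      _ ≤ _ := ih

lemma ept_le_Phi (adj : V → V → Prop) [DecidableRel adj] (S : Finset V)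
    (hfin : RZF.ept (RZF.unweight adj) S ≠ ⊤) :
    RZF.ept (RZF.unweight adj) S ≤ (Phi adj S : ℝ≥0∞) := by
  rw [RZF.ept]
  apply ENNReal.summable.tsum_le_of_sum_range_le
  intro T
  calc ∑ t ∈ Finset.range T,
        ∑ C ∈ Finset.univ.filter (fun C : Finset V => C ≠ Finset.univ),
          RZF.state (RZF.unweight adj) S t C
      ≤ (∑ B : Finset V, RZF.state (RZF.unweight adj) S T B * (Phi adj B : ℝ≥0∞)) +
        ∑ t ∈ Finset.range T,
          ∑ C ∈ Finset.univ.filter (fun C : Finset V => C ≠ Finset.univ),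
            RZF.state (RZF.unweight adj) S t C := le_add_self
    _ ≤ _ := partial_sum_le adj S hfin T

end RZFaux

/-- `reachIn adj t a b` : there is a directed path of length at most `t`
from `a` to `b` in the directed graph with adjacency relation `adj`. -/
def reachIn {V : Type*} (adj : V → V → Prop) : ℕ → V → V → Prop
  | 0, a, b => a = b
  | t + 1, a, b => reachIn adj t a b ∨ ∃ c, reachIn adj t a c ∧ adj c b

/-- Let `G` be an unweighted directed graph with `m`
directed edges in which every vertex has indegree at least `d`, and let `v` be
a vertex with finite expected propagation time. Then `ept_rzf(G, v) ≤ m - d`. -/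
theorem rzf_ept_le_edges_sub_indeg {V : Type*} [Fintype V] [DecidableEq V]
    (adj : V → V → Prop) [DecidableRel adj] (d : ℕ)
    (hd : ∀ x : V, d ≤ (Finset.univ.filter (fun u => adj u x)).card)
    (v : V) (hfin : RZF.ept (RZF.unweight adj) {v} < ⊤) :
    RZF.ept (RZF.unweight adj) {v} ≤
      (((∑ u : V, (Finset.univ.filter (fun x => adj u x)).card) - d : ℕ) : ℝ≥0∞) := by
  have hmain := RZFaux.ept_le_Phi adj {v} hfin.ne
  refine hmain.trans ?_
  rw [Nat.cast_le]
  have hm : ∑ u : V, (Finset.univ.filter (fun x => adj u x)).card =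
      ∑ x : V, (Finset.univ.filter (fun u => adj u x)).card := by
    simp only [Finset.card_filter]
    exact Finset.sum_comm
  have hcompl : RZFaux.Phi adj {v} + (Finset.univ.filter (fun u => adj u v)).card =
      ∑ x : V, (Finset.univ.filter (fun u => adj u x)).card := by
    rw [RZFaux.Phi]
    rw [← Finset.sum_compl_add_sum ({v} : Finset V)
      (f := fun x => (Finset.univ.filter (fun u => adj u x)).card)]
    rw [Finset.sum_singleton]
  have hdv := hd v
  omega
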